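/- Let L = L(a,b) be the free Lie ring on two generators and L_{2,n} its homogeneous component spanned by commutators with 2 occurrences of a and n of b. Then the set { [C_k, C_l] : k > l, k + l = n } is a ℤ-basis of L_{2,n}, where Cₙ = [a,_n b]. -/

import Mathlib

open FreeLieAlgebra

/-- Bracket monomials in the free Lie ring on two generators `a = of false`, `b = of true`,
with `p` occurrences of `a` and `q` occurrences of `b`. -/
inductive IsBracketMono : ℕ → ℕ → FreeLieAlgebra ℤ Bool → Prop
  | a : IsBracketMono 1 0 (of ℤ false)
  | b : IsBracketMono 0 1 (of ℤ true)
  | lie {p q r s : ℕ} {x y : FreeLieAlgebra ℤ Bool} :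
      IsBracketMono p q x → IsBracketMono r s y → IsBracketMono (p + r) (q + s) ⁅x, y⁆

/-- The bihomogeneous component `L_{p,q}` of the free Lie ring on two generators. -/
noncomputable def Lcomp (p q : ℕ) : Submodule ℤ (FreeLieAlgebra ℤ Bool) :=
  Submodule.span ℤ {x | IsBracketMono p q x}

/-- The Engel bracket `Cₙ = [a,_n b]`. -/
noncomputable def C : ℕ → FreeLieAlgebra ℤ Bool
  | 0 => of ℤ false
  | n + 1 => ⁅C n, of ℤ true⁆

attribute [local instance 100] LieRing.ofAssociativeRing

/-! ### The Witt-type representation, used for linear independence -/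

noncomputable def E (α : ℤ) : Module.End ℤ (ℤ →₀ ℤ) :=
  Finsupp.lsum ℤ (fun j => (j : ℤ) • Finsupp.lsingle (j + α))

lemma E_single (α j b : ℤ) : E α (Finsupp.single j b) = j • Finsupp.single (j + α) b := by
  rw [E, Finsupp.lsum_single, LinearMap.smul_apply, Finsupp.lsingle_apply]

lemma E_lie (α β : ℤ) : ⁅E α, E β⁆ = (β - α) • E (α + β) := by
  apply Finsupp.lhom_ext
  intro j b
  simp only [Ring.lie_def, LinearMap.sub_apply, LinearMap.smul_apply, Module.End.mul_apply,
    E_single, map_smul, smul_smul]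
  rw [show j + β + α = j + (α + β) by ring, show j + α + β = j + (α + β) by ring, ← sub_smul]
  congr 1; ring

noncomputable def φ (α : ℤ) : FreeLieAlgebra ℤ Bool →ₗ⁅ℤ⁆ Module.End ℤ (ℤ →₀ ℤ) :=
  FreeLieAlgebra.lift ℤ (fun t => if t then E 1 else E α)

def c (α : ℤ) : ℕ → ℤ
  | 0 => 1
  | k + 1 => (1 - (α + k)) * c α k

lemma φ_C (α : ℤ) (k : ℕ) : φ α (C k) = c α k • E (α + k) := by
  induction k with
  | zero => simp only [C, c, Nat.cast_zero, add_zero, one_smul]; exact lift_of_apply _ _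
  | succ k ih =>
      rw [C, LieHom.map_lie, ih, show φ α (of ℤ true) = E 1 from lift_of_apply _ _,
        smul_lie, E_lie, smul_smul, show α + (k:ℤ) + 1 = α + ((k+1 : ℕ) : ℤ) by push_cast; ring,
        c, mul_comm]

lemma φ_CC (α : ℤ) (k l : ℕ) :
    φ α ⁅C k, C l⁆ = (((l : ℤ) - k) * (c α k * c α l)) • E (2*α + (k + l)) := by
  rw [LieHom.map_lie, φ_C, φ_C, smul_lie, lie_smul, E_lie, smul_smul, smul_smul,
    show α + (k:ℤ) + (α + l) = 2*α + ((k:ℤ) + l) by ring]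
  congr 1
  ring

/-- The key integer-valued functionals. -/
noncomputable def F (α t : ℤ) : FreeLieAlgebra ℤ Bool →ₗ[ℤ] ℤ where
  toFun x := ((φ α x) (Finsupp.single 1 1)) t
  map_add' x y := by simp
  map_smul' r x := by simp

lemma F_CC (α : ℤ) {k l n : ℕ} (hn : k + l = n) :
    F α (1 + (2*α + n)) ⁅C k, C l⁆ = ((l:ℤ) - k) * (c α k * c α l) := by
  subst hn
  show ((φ α ⁅C k, C l⁆) (Finsupp.single 1 1)) _ = _
  simp only [φ_CC, LinearMap.smul_apply, E_single, one_smul, smul_smul, Finsupp.smul_apply]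
  rw [show ((1:ℤ) + (2*α + ((k+l:ℕ) : ℤ))) = 1 + (2*α + ((k:ℤ) + l)) by push_cast; ring,
    Finsupp.single_eq_same]
  rw [smul_eq_mul, mul_one]

lemma c_desc (m k : ℕ) : c (1 - (m:ℤ)) k = (Nat.descFactorial m k : ℤ) := by
  induction k with
  | zero => simp [c]
  | succ k ih =>
      by_cases h : k ≤ m
      · rw [c, ih, Nat.descFactorial_succ]
        push_cast [h]
        ring
      · have h1 : Nat.descFactorial m k = 0 := Nat.descFactorial_eq_zero_iff_lt.2 (by omega)
        have h2 : Nat.descFactorial m (k+1) = 0 := Nat.descFactorial_eq_zero_iff_lt.2 (by omega)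
        rw [c, ih, h1, h2]
        push_cast
        ring

/-! ### Linear independence -/

lemma lin_indep (n : ℕ) :
    LinearIndependent ℤ (fun i : {p : ℕ × ℕ // p.1 > p.2 ∧ p.1 + p.2 = n} =>
      ⁅C i.1.1, C i.1.2⁆) := by
  rw [linearIndependent_iff']
  intro s g hsum
  suffices H : ∀ K : ℕ, ∀ i ∈ s, i.1.1 ≤ K → g i = 0 by
    exact fun i hi => H i.1.1 i hi le_rfl
  intro K
  induction K using Nat.strong_induction_on with
  | _ K IH =>
  intro i hi hK
  rcases lt_or_eq_of_le hK with hlt | hKeq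
  · exact IH i.1.1 hlt i hi le_rfl
  -- apply the functional F (1 - K)
  set α : ℤ := 1 - (K:ℤ) with hα
  have h0 : (∑ j ∈ s, g j * (((j.1.2:ℤ) - j.1.1) *
      ((Nat.descFactorial K j.1.1 : ℤ) * (Nat.descFactorial K j.1.2 : ℤ)))) = 0 := by
    have h1 := congrArg (F α (1 + (2*α + n))) hsum
    rw [map_sum, map_zero] at h1
    rw [← h1]
    refine Finset.sum_congr rfl fun j hj => ?_
    rw [map_smul, F_CC α j.2.2, hα, c_desc, c_desc, smul_eq_mul]
  have hvanish : ∀ j ∈ s, j ≠ i → g j * (((j.1.2:ℤ) - j.1.1) *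
      ((Nat.descFactorial K j.1.1 : ℤ) * (Nat.descFactorial K j.1.2 : ℤ))) = 0 := by
    intro j hj hne
    rcases lt_trichotomy j.1.1 K with hj1 | hj1 | hj1
    · rw [IH j.1.1 hj1 j hj le_rfl, zero_mul]
    · exfalso
      apply hne
      have e1 := j.2.2
      have e2 := i.2.2
      exact Subtype.ext (Prod.ext (by omega) (by omega))
    · rw [Nat.descFactorial_eq_zero_iff_lt.2 hj1]
      push_cast
      ring
  rw [Finset.sum_eq_single_of_mem i hi hvanish] at h0
  have hil : i.1.2 < K := hKeq ▸ i.2.1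
  have h2 : ((i.1.2:ℤ) - i.1.1) ≠ 0 := by
    have := i.2.1
    omega
  have h3 : (Nat.descFactorial K i.1.1 : ℤ) ≠ 0 := by
    rw [Ne, Nat.cast_eq_zero, Nat.descFactorial_eq_zero_iff_lt]
    omega
  have h4 : (Nat.descFactorial K i.1.2 : ℤ) ≠ 0 := by
    rw [Ne, Nat.cast_eq_zero, Nat.descFactorial_eq_zero_iff_lt]
    omega
  exact (mul_eq_zero.1 h0).resolve_right (mul_ne_zero h2 (mul_ne_zero h3 h4))


/-! ### Spanning -/

lemma monoC (k : ℕ) : IsBracketMono 1 k (C k) := by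
  induction k with
  | zero => exact IsBracketMono.a
  | succ k ih => exact IsBracketMono.lie ih IsBracketMono.b

lemma mono_fst0 {p q : ℕ} {x : FreeLieAlgebra ℤ Bool} (h : IsBracketMono p q x) :
    p = 0 → (q = 1 ∧ x = of ℤ true) ∨ x = 0 := by
  induction h with
  | a => intro h; exact absurd h one_ne_zero
  | b => exact fun _ => Or.inl ⟨rfl, rfl⟩
  | @lie p q r s x y hx hy ihx ihy =>
      intro hpr
      rcases ihx (by omega) with ⟨hq, rfl⟩ | rfl
      · rcases ihy (by omega) with ⟨hs, rfl⟩ | rfl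
        · exact Or.inr (lie_self _)
        · exact Or.inr (lie_zero _)
      · exact Or.inr (zero_lie _)

lemma mono_fst1 {p q : ℕ} {x : FreeLieAlgebra ℤ Bool} (h : IsBracketMono p q x) :
    p = 1 → x = C q ∨ x = -C q ∨ x = 0 := by
  induction h with
  | a => intro _; exact Or.inl rfl
  | b => intro h; exact absurd h zero_ne_one
  | @lie p q r s x y hx hy ihx ihy =>
      intro hpr
      rcases (by omega : p = 1 ∧ r = 0 ∨ p = 0 ∧ r = 1) with ⟨hp, hr⟩ | ⟨hp, hr⟩
      · rcases mono_fst0 hy hr with ⟨hs, rfl⟩ | rfl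
        · subst hs
          rcases ihx hp with rfl | rfl | rfl
          · exact Or.inl rfl
          · refine Or.inr (Or.inl ?_)
            rw [neg_lie]
            rfl
          · exact Or.inr (Or.inr (zero_lie _))
        · exact Or.inr (Or.inr (lie_zero _))
      · rcases mono_fst0 hx hp with ⟨hq, rfl⟩ | rfl
        · subst hq
          rw [show 1 + s = s + 1 by omega]
          rcases ihy hr with rfl | rfl | rfl
          · refine Or.inr (Or.inl ?_)
            rw [← lie_skew]
            rfl
          · refine Or.inl ?_
            rw [lie_neg, ← lie_skew, neg_neg]
            rfl
          · exact Or.inr (Or.inr (lie_zero _))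
        · exact Or.inr (Or.inr (zero_lie _))

/-- The candidate basis family. -/
noncomputable def fam (n : ℕ) (i : {p : ℕ × ℕ // p.1 > p.2 ∧ p.1 + p.2 = n}) :
    FreeLieAlgebra ℤ Bool :=
  ⁅C i.1.1, C i.1.2⁆

lemma CC_mem_span {k l n : ℕ} (hkl : k + l = n) :
    ⁅C k, C l⁆ ∈ Submodule.span ℤ (Set.range (fam n)) := by
  rcases lt_trichotomy l k with h | h | h
  · exact Submodule.subset_span ⟨⟨(k, l), ⟨h, hkl⟩⟩, rfl⟩
  · subst h
    rw [lie_self]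
    exact zero_mem _
  · rw [← lie_skew]
    exact neg_mem (Submodule.subset_span ⟨⟨(l, k), ⟨h, by omega⟩⟩, rfl⟩)

lemma span_lie_b {n : ℕ} {z : FreeLieAlgebra ℤ Bool}
    (hz : z ∈ Submodule.span ℤ (Set.range (fam n))) :
    ⁅z, of ℤ true⁆ ∈ Submodule.span ℤ (Set.range (fam (n + 1))) := by
  induction hz using Submodule.span_induction with
  | mem w hw =>
      obtain ⟨⟨⟨k, l⟩, ⟨hkl, hn⟩⟩, rfl⟩ := hw
      show ⁅⁅C k, C l⁆, of ℤ true⁆ ∈ _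
      rw [lie_lie]
      exact sub_mem (CC_mem_span (k := k) (l := l + 1) (by omega))
        (CC_mem_span (k := l) (l := k + 1) (by omega))
  | zero => rw [zero_lie]; exact zero_mem _
  | add u v hu hv ihu ihv => rw [add_lie]; exact add_mem ihu ihv
  | smul a u hu ihu => rw [smul_lie]; exact Submodule.smul_mem _ a ihu

lemma mono_fst2 {p q : ℕ} {x : FreeLieAlgebra ℤ Bool} (h : IsBracketMono p q x) :
    p = 2 → x ∈ Submodule.span ℤ (Set.range (fam q)) := by
  induction h with
  | a => intro h; exact absurd h (by norm_num)
  | b => intro h; exact absurd h (by norm_num)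
  | @lie p q r s x y hx hy ihx ihy =>
      intro hpr
      rcases (by omega : p = 2 ∧ r = 0 ∨ p = 1 ∧ r = 1 ∨ p = 0 ∧ r = 2)
        with ⟨hp, hr⟩ | ⟨hp, hr⟩ | ⟨hp, hr⟩
      · rcases mono_fst0 hy hr with ⟨hs, rfl⟩ | rfl
        · subst hs
          exact span_lie_b (ihx hp)
        · rw [lie_zero]; exact zero_mem _
      · rcases mono_fst1 hx hp with rfl | rfl | rfl <;>
          rcases mono_fst1 hy hr with rfl | rfl | rfl <;>
          (try simp only [neg_lie, lie_neg, neg_neg, lie_zero, zero_lie]) <;>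
          first
            | exact zero_mem _
            | exact CC_mem_span rfl
            | exact neg_mem (CC_mem_span rfl)
      · rcases mono_fst0 hx hp with ⟨hq, rfl⟩ | rfl
        · subst hq
          rw [show 1 + s = s + 1 by omega, ← lie_skew]
          exact neg_mem (span_lie_b (ihy hr))
        · rw [zero_lie]; exact zero_mem _

lemma Lcomp_eq_span (n : ℕ) :
    Lcomp 2 n = Submodule.span ℤ (Set.range (fam n)) := by
  apply le_antisymm
  · rw [Lcomp, Submodule.span_le]
    exact fun x hx => mono_fst2 hx rfl
  · rw [Submodule.span_le]
    rintro w ⟨⟨⟨k, l⟩, ⟨hkl, hn⟩⟩, rfl⟩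
    apply Submodule.subset_span
    show IsBracketMono 2 n ⁅C k, C l⁆
    have := IsBracketMono.lie (monoC k) (monoC l)
    rwa [hn] at this

theorem basis_L2n (n : ℕ) :
    ∃ B : Module.Basis {p : ℕ × ℕ // p.1 > p.2 ∧ p.1 + p.2 = n} ℤ (Lcomp 2 n),
      ∀ p, (B p : FreeLieAlgebra ℤ Bool) = ⁅C p.1.1, C p.1.2⁆ := by
  have hli : LinearIndependent ℤ (fam n) := lin_indep n
  refine ⟨(Module.Basis.span hli).map (LinearEquiv.ofEq _ _ (Lcomp_eq_span n).symm), fun p => ?_⟩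
  rw [Module.Basis.map_apply]
  have : ((LinearEquiv.ofEq _ _ (Lcomp_eq_span n).symm) ((Module.Basis.span hli) p) :
      FreeLieAlgebra ℤ Bool) = ((Module.Basis.span hli) p : FreeLieAlgebra ℤ Bool) := rfl
  rw [this, Module.Basis.span_apply]
  rfl
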